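/- arXiv:1902.09497 — 5 statements merged into one kernel-verified Lean document; each statement's English description precedes it below -/
import Mathlib

section
/- Let a commutative family of continuous affine self-maps of a nonempty compact convex subset C of a locally convex topological vector space be given. Then the family has a common fixed point in C. (Markov–Kakutani fixed point theorem.) -/
open Set Filter Topology Pointwise

noncomputable def mkAvgSeq {E : Type*} [AddCommGroup E] [Module ℝ E]
    (y : ℕ → E) (x0 : E) : ℕ → E
  | 0 => x0
  | (n+1) => ((n:ℝ)+2)⁻¹ • y (n+1) + (1 - ((n:ℝ)+2)⁻¹) • mkAvgSeq y x0 n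

/-- Single-map Markov–Kakutani. -/
theorem mk_single {E : Type*} [AddCommGroup E] [Module ℝ E] [TopologicalSpace E]
    [IsTopologicalAddGroup E] [ContinuousSMul ℝ E] [T2Space E]
    (K : Set E) (hne : K.Nonempty) (hcomp : IsCompact K) (hconv : Convex ℝ K)
    (f : E → E) (hmaps : MapsTo f K K) (hcont : ContinuousOn f K)
    (haff : ∀ x ∈ K, ∀ y ∈ K, ∀ t ∈ Icc (0:ℝ) 1,
      f (t • x + (1 - t) • y) = t • f x + (1 - t) • f y) :
    ∃ c ∈ K, f c = c := by
  obtain ⟨x0, hx0⟩ := hne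
  set y : ℕ → E := fun n => f^[n] x0 with hy
  have hyK : ∀ n, y n ∈ K := fun n => hmaps.iterate n hx0
  set S : ℕ → E := mkAvgSeq y x0 with hS
  have ha0 : ∀ n : ℕ, ((n:ℝ)+2)⁻¹ ∈ Icc (0:ℝ) 1 := by
    intro n
    constructor
    · positivity
    · rw [inv_le_one_iff₀]; right; linarith
  have hSK : ∀ n, S n ∈ K := by
    intro n
    induction n with
    | zero => exact hx0
    | succ n ih =>
      have h := ha0 n
      exact hconv (hyK (n+1)) ih h.1 (by linarith [h.2]) (by ring)
  have key : ∀ n, f (S n) - S n = ((n:ℝ)+1)⁻¹ • (y (n+1) - x0) := by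
    intro n
    induction n with
    | zero =>
      simp [hS, mkAvgSeq, hy, Function.iterate_one]
    | succ n ih =>
      have hstep : S (n+1) = ((n:ℝ)+2)⁻¹ • y (n+1) + (1 - ((n:ℝ)+2)⁻¹) • S n := rfl
      have hfy : f (y (n+1)) = y (n+2) := by
        simp only [hy]
        rw [← Function.iterate_succ_apply' f (n+1) x0]
      have haffn := haff (y (n+1)) (hyK (n+1)) (S n) (hSK n) _ (ha0 n)
      have hfS : f (S n) = S n + ((n:ℝ)+1)⁻¹ • (y (n+1) - x0) := by
        rw [← ih]; abel
      rw [hstep, haffn, hfy, hfS]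
      have h1 : ((n:ℝ)+1) ≠ 0 := by positivity
      have h2 : ((n:ℝ)+2) ≠ 0 := by positivity
      push_cast
      match_scalars <;> field_simp <;> ring
  -- cluster point
  have hmaple : Filter.map S atTop ≤ 𝓟 K :=
    le_principal_iff.mpr (eventually_map.mpr (Eventually.of_forall hSK))
  obtain ⟨c, hcK, hc⟩ := hcomp hmaple
  refine ⟨c, hcK, ?_⟩
  set F : Filter ℕ := atTop ⊓ Filter.comap S (𝓝 c) with hF
  have hFne : F.NeBot := by
    rw [hF]
    apply Filter.NeBot.of_map (m := S)
    rw [Filter.push_pull]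
    exact (inf_comm (𝓝 c) (Filter.map S atTop)) ▸ hc
  have hStendsto : Tendsto S F (𝓝[K] c) := by
    rw [nhdsWithin]
    exact le_inf (tendsto_comap.mono_left inf_le_right)
      (le_principal_iff.mpr ((eventually_map.mpr (Eventually.of_forall hSK)).filter_mono inf_le_left))
  have hfS : Tendsto (fun n => f (S n)) F (𝓝 (f c)) :=
    (hcont c hcK).tendsto.comp hStendsto
  have hdiff : Tendsto (fun n => f (S n) - S n) F (𝓝 (f c - c)) :=
    hfS.sub (hStendsto.mono_right nhdsWithin_le_nhds)
  -- the difference tends to zero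
  letI : UniformSpace E := IsTopologicalAddGroup.rightUniformSpace E
  haveI : IsUniformAddGroup E := isUniformAddGroup_of_addCommGroup
  have hbdd : Bornology.IsVonNBounded ℝ (K - K) :=
    (((sub_eq_add_neg K K) ▸ (hcomp.add hcomp.neg)).totallyBounded).isVonNBounded ℝ
  have hzero : Tendsto (fun n : ℕ => ((n:ℝ)+1)⁻¹ • (y (n+1) - x0)) F (𝓝 0) := by
    apply Tendsto.mono_left _ (inf_le_left : F ≤ atTop)
    apply hbdd.smul_tendsto_zero (x := fun n => y (n+1) - x0)
      (Eventually.of_forall fun n => sub_mem_sub (hyK (n+1)) hx0)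
    have := tendsto_one_div_add_atTop_nhds_zero_nat (𝕜 := ℝ)
    simpa [one_div] using this
  have : f c - c = 0 := by
    apply tendsto_nhds_unique hdiff
    simpa only [key] using hzero
  exact sub_eq_zero.mp this

/-- **Markov–Kakutani fixed point theorem**: a commuting family of continuous affine
self-maps of a nonempty compact convex subset of a Hausdorff locally convex real
topological vector space has a common fixed point. -/
theorem markov_kakutani {E : Type*} [AddCommGroup E] [Module ℝ E] [TopologicalSpace E]
    [IsTopologicalAddGroup E] [ContinuousSMul ℝ E] [T2Space E] [LocallyConvexSpace ℝ E]
    {ι : Type*} (C : Set E) (hne : C.Nonempty) (hcomp : IsCompact C) (hconv : Convex ℝ C)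
    (T : ι → E → E)
    (hmaps : ∀ i, MapsTo (T i) C C)
    (hcont : ∀ i, ContinuousOn (T i) C)
    (haff : ∀ i, ∀ x ∈ C, ∀ y ∈ C, ∀ t ∈ Icc (0:ℝ) 1,
      T i (t • x + (1 - t) • y) = t • T i x + (1 - t) • T i y)
    (hcomm : ∀ i j, ∀ x ∈ C, T i (T j x) = T j (T i x)) :
    ∃ c ∈ C, ∀ i, T i c = c := by
  classical
  set Fix : ι → Set E := fun i => {x | x ∈ C ∧ T i x = x} with hFix
  have hFixC : ∀ i, Fix i ⊆ C := fun i x hx => hx.1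
  have hclosed : ∀ i, IsClosed (Fix i) := by
    intro i
    have h1 : ContinuousOn (fun x => T i x - x) C := (hcont i).sub continuousOn_id
    have h2 : Fix i = C ∩ (fun x => T i x - x) ⁻¹' {0} := by
      ext x
      simp only [hFix, mem_setOf_eq, mem_inter_iff, mem_preimage, mem_singleton_iff,
        sub_eq_zero]
    rw [h2]
    exact h1.preimage_isClosed_of_isClosed hcomp.isClosed isClosed_singleton
  have hconvFix : ∀ i, Convex ℝ (Fix i) := by
    intro i x hx y hy a b ha hb hab
    have hb' : b = 1 - a := by linarith
    subst hb'
    refine ⟨hconv hx.1 hy.1 ha hb hab, ?_⟩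
    rw [haff i x hx.1 y hy.1 a ⟨ha, by linarith⟩, hx.2, hy.2]
  -- fixed sets of finite families
  have hfin : ∀ u : Finset ι, (C ∩ ⋂ i ∈ u, Fix i).Nonempty := by
    intro u
    induction u using Finset.induction_on with
    | empty => simpa using hne
    | @insert j u hj ih =>
      set K : Set E := C ∩ ⋂ i ∈ u, Fix i with hK
      have hKC : K ⊆ C := inter_subset_left
      have hKconv : Convex ℝ K :=
        hconv.inter (convex_iInter fun i => convex_iInter fun _ => hconvFix i)
      have hKcomp : IsCompact K :=
        IsCompact.of_isClosed_subset hcomp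
          (hcomp.isClosed.inter (isClosed_iInter fun i => isClosed_iInter fun _ => hclosed i))
          hKC
      have hKmaps : MapsTo (T j) K K := by
        rintro x ⟨hxC, hxF⟩
        refine ⟨hmaps j hxC, ?_⟩
        rw [mem_iInter₂] at hxF ⊢
        intro i hi
        have hfix := (hxF i hi).2
        refine ⟨hmaps j hxC, ?_⟩
        rw [hcomm i j x hxC, hfix]
      obtain ⟨c, hcK, hcfix⟩ := mk_single K ih hKcomp hKconv (T j) hKmaps
        ((hcont j).mono hKC)
        (fun x hx y hy t ht => haff j x (hKC hx) y (hKC hy) t ht)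
      refine ⟨c, hcK.1, ?_⟩
      rw [mem_iInter₂]
      intro i hi
      rcases Finset.mem_insert.mp hi with rfl | hi
      · exact ⟨hcK.1, hcfix⟩
      · exact (mem_iInter₂.mp hcK.2) i hi
  obtain ⟨c, hcC, hcFix⟩ := hcomp.inter_iInter_nonempty Fix hclosed hfin
  exact ⟨c, hcC, fun i => (mem_iInter.mp hcFix i).2⟩
end

section
/- Let G act continuously by affine maps on a nonempty compact convex set C, and let K ≤ G be compact with Haar probability measure κ. Then the barycenter map c ↦ ∫_K k·c dκ(k) is a well-defined continuous affine retraction of C onto the fixed-point set C^K of K, and in particular C^K is a nonempty compact convex set. -/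
open MeasureTheory Set

/-- A map which is continuous and affine on a compact convex set commutes with integrals of
functions valued in that set (for a probability measure). -/
lemma affine_comm_integral {E : Type*} [NormedAddCommGroup E] [NormedSpace ℝ E]
    [CompleteSpace E] {α : Type*} [MeasurableSpace α] (μ : Measure α) [IsProbabilityMeasure μ]
    {C : Set E} (hcomp : IsCompact C) (hconv : Convex ℝ C)
    {T : E → E} (hTc : ContinuousOn T C)
    (hTa : ∀ x ∈ C, ∀ y ∈ C, ∀ t ∈ Icc (0:ℝ) 1,
      T (t • x + (1 - t) • y) = t • T x + (1 - t) • T y)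
    {f : α → E} (hf : Integrable f μ) (hfC : ∀ x, f x ∈ C)
    (hTf : Integrable (fun x => T (f x)) μ) :
    T (∫ x, f x ∂μ) = ∫ x, T (f x) ∂μ := by
  have hScomp : IsCompact ((fun x => (x, T x)) '' C) :=
    hcomp.image_of_continuousOn (continuousOn_id.prodMk hTc)
  have hSconv : Convex ℝ ((fun x => (x, T x)) '' C) := by
    rintro - ⟨x, hx, rfl⟩ - ⟨y, hy, rfl⟩ s t hs ht hst
    refine ⟨s • x + t • y, hconv hx hy hs ht hst, ?_⟩
    have h1 : t = 1 - s := by linarith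
    have h2 := hTa x hx y hy s ⟨hs, by linarith⟩
    subst h1
    simp only [Prod.smul_mk, Prod.mk_add_mk]
    exact Prod.ext rfl h2
  have hmem : ((∫ x, f x ∂μ, ∫ x, T (f x) ∂μ) : E × E) ∈ (fun x => (x, T x)) '' C := by
    rw [← integral_pair hf hTf]
    exact hSconv.integral_mem hScomp.isClosed
      (Filter.Eventually.of_forall fun x => ⟨f x, hfC x, rfl⟩) (hf.prodMk hTf)
  obtain ⟨z, _, hz⟩ := hmem
  have h1 : z = ∫ x, f x ∂μ := congrArg Prod.fst hz
  have h2 : T z = ∫ x, T (f x) ∂μ := congrArg Prod.snd hz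
  rw [← h1, h2]

/-- If a topological group `G` acts continuously by affine maps on a nonempty compact convex
set `C` and `K ≤ G` is a compact subgroup with Haar probability measure `κ₀`, then the
barycenter map `c ↦ ∫_K k • c dκ₀(k)` is a continuous affine retraction of `C` onto the
fixed-point set `C^K`; in particular `C^K` is a nonempty compact convex set. -/
theorem barycenter_retraction_onto_fixed_points {G E : Type*} [Group G] [TopologicalSpace G]
    [IsTopologicalGroup G] [T2Space G]
    [NormedAddCommGroup E] [NormedSpace ℝ E] [CompleteSpace E]
    [MeasurableSpace G] [BorelSpace G]
    (C : Set E) (hne : C.Nonempty) (hcomp : IsCompact C) (hconv : Convex ℝ C)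
    (a : G → E → E)
    (hone : ∀ c, a 1 c = c)
    (hmul : ∀ g h c, a (g * h) c = a g (a h c))
    (hmaps : ∀ g, MapsTo (a g) C C)
    (hjoint : ContinuousOn (fun p : G × E => a p.1 p.2) (univ ×ˢ C))
    (haff : ∀ g, ∀ x ∈ C, ∀ y ∈ C, ∀ t ∈ Icc (0:ℝ) 1,
      a g (t • x + (1 - t) • y) = t • a g x + (1 - t) • a g y)
    (K : Subgroup G) [CompactSpace K]
    (κ₀ : Measure K) [κ₀.IsHaarMeasure] [IsProbabilityMeasure κ₀]
    (b : E → E) (hb : ∀ c, b c = ∫ k : K, a (k : G) c ∂κ₀)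
    (CK : Set E) (hCK : CK = {c ∈ C | ∀ k ∈ K, a k c = c}) :
    (∀ c ∈ C, b c ∈ CK) ∧
    ContinuousOn b C ∧
    (∀ x ∈ C, ∀ y ∈ C, ∀ t ∈ Icc (0:ℝ) 1,
      b (t • x + (1 - t) • y) = t • b x + (1 - t) • b y) ∧
    (∀ c ∈ CK, b c = c) ∧
    CK.Nonempty ∧ IsCompact CK ∧ Convex ℝ CK := by
  haveI : BorelSpace (↥K) := Subtype.borelSpace (K : Set G)
  -- continuity of each `a g` on `C`
  have hMC : ∀ g : G, ContinuousOn (a g) C := by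
    intro g
    exact hjoint.comp ((continuous_const.prodMk continuous_id).continuousOn)
      (fun x hx => ⟨trivial, hx⟩)
  -- continuity of the orbit map
  have horb : ∀ c ∈ C, Continuous (fun k : K => a (k : G) c) := by
    intro c hc
    exact hjoint.comp_continuous (continuous_subtype_val.prodMk continuous_const)
      (fun k => ⟨trivial, hc⟩)
  -- integrability of the orbit map
  have hint : ∀ c ∈ C, Integrable (fun k : K => a (k : G) c) κ₀ := by
    intro c hc
    exact (horb c hc).integrable_of_hasCompactSupport (HasCompactSupport.of_compactSpace _)
  have haC : ∀ (g : G), ∀ c ∈ C, a g c ∈ C := fun g c hc => hmaps g hc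
  -- b maps C into C
  have hbC : ∀ c ∈ C, b c ∈ C := by
    intro c hc
    rw [hb]
    exact hconv.integral_mem hcomp.isClosed
      (Filter.Eventually.of_forall fun k => haC _ c hc) (hint c hc)
  -- b maps C into CK
  have hbCK : ∀ c ∈ C, b c ∈ CK := by
    intro c hc
    rw [hCK]
    refine ⟨hbC c hc, ?_⟩
    intro k₀ hk₀
    have hcomm : a k₀ (∫ k : K, a (k : G) c ∂κ₀) = ∫ k : K, a k₀ (a (k : G) c) ∂κ₀ := by
      refine affine_comm_integral κ₀ hcomp hconv (hMC k₀) (haff k₀) (hint c hc)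
        (fun k => haC _ c hc) ?_
      have : Continuous (fun k : K => a k₀ (a (k : G) c)) := by
        refine (hMC k₀).comp_continuous (horb c hc) (fun k => haC _ c hc)
      exact this.integrable_of_hasCompactSupport (HasCompactSupport.of_compactSpace _)
    have hinv : ∫ k : K, a ((⟨k₀, hk₀⟩ : K) * k : K) c ∂κ₀ = ∫ k : K, a (k : G) c ∂κ₀ :=
      integral_mul_left_eq_self (fun k : K => a (k : G) c) (⟨k₀, hk₀⟩ : K)
    rw [hb]
    rw [hcomm]
    calc ∫ k : K, a k₀ (a (k : G) c) ∂κ₀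
        = ∫ k : K, a ((⟨k₀, hk₀⟩ : K) * k : K) c ∂κ₀ := by
          congr 1; funext k
          simp [hmul]
      _ = ∫ k : K, a (k : G) c ∂κ₀ := hinv
  -- continuity of b on C
  have hbcont : ContinuousOn b C := by
    obtain ⟨M, hM⟩ : ∃ M : ℝ, ∀ x ∈ C, ‖x‖ ≤ M := by
      obtain ⟨M, hM⟩ := hcomp.isBounded.subset_ball 0
      refine ⟨M, fun x hx => ?_⟩
      have := hM hx
      rw [Metric.mem_ball, dist_zero_right] at this
      exact this.le
    have : ContinuousOn (fun c => ∫ k : K, a (k : G) c ∂κ₀) C := by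
      intro c₀ hc₀
      refine continuousWithinAt_of_dominated (bound := fun _ => M) ?_ ?_ ?_ ?_
      · filter_upwards [self_mem_nhdsWithin] with c hc
        exact (hint c hc).aestronglyMeasurable
      · filter_upwards [self_mem_nhdsWithin] with c hc
        exact Filter.Eventually.of_forall fun k => hM _ (haC _ c hc)
      · exact integrable_const M
      · refine Filter.Eventually.of_forall fun k => ?_
        exact (hjoint.comp ((continuous_const.prodMk continuous_id).continuousOn)
          (fun x hx => ⟨trivial, hx⟩)) c₀ hc₀
    have heq : EqOn b (fun c => ∫ k : K, a (k : G) c ∂κ₀) C := fun c _ => hb c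
    exact ContinuousOn.congr this heq
  -- affinity of b
  have hbaff : ∀ x ∈ C, ∀ y ∈ C, ∀ t ∈ Icc (0:ℝ) 1,
      b (t • x + (1 - t) • y) = t • b x + (1 - t) • b y := by
    intro x hx y hy t ht
    rw [hb, hb, hb]
    have h1 : (fun k : K => a (k : G) (t • x + (1 - t) • y))
        = fun k : K => t • a (k : G) x + (1 - t) • a (k : G) y := by
      funext k; exact haff _ x hx y hy t ht
    have hadd := integral_add (μ := κ₀) (f := fun k : K => t • a (k : G) x)
      (g := fun k : K => (1 - t) • a (k : G) y) ((hint x hx).smul t) ((hint y hy).smul (1 - t))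
    rw [h1, hadd, integral_smul, integral_smul]
  -- b fixes CK
  have hbfix : ∀ c ∈ CK, b c = c := by
    intro c hc
    rw [hCK] at hc
    rw [hb]
    have : (fun k : K => a (k : G) c) = fun _ : K => c := by
      funext k; exact hc.2 k k.2
    rw [this, integral_const]
    simp
  have hCKsub : CK ⊆ C := by rw [hCK]; exact fun c hc => hc.1
  -- CK = b '' C
  have himg : CK = b '' C := by
    apply Subset.antisymm
    · intro c hc
      exact ⟨c, hCKsub hc, hbfix c hc⟩
    · rintro - ⟨c, hc, rfl⟩
      exact hbCK c hc
  refine ⟨hbCK, hbcont, hbaff, hbfix, ?_, ?_, ?_⟩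
  · obtain ⟨c, hc⟩ := hne
    exact ⟨b c, hbCK c hc⟩
  · rw [himg]
    exact hcomp.image_of_continuousOn hbcont
  · rw [hCK]
    intro x hx y hy s t hs ht hst
    refine ⟨hconv hx.1 hy.1 hs ht hst, ?_⟩
    intro k hk
    have h1 : t = 1 - s := by linarith
    rw [h1]
    rw [haff k x hx.1 y hy.1 s ⟨hs, by linarith⟩, hx.2 k hk, hy.2 k hk]
end

section
/- If a compact group K acts continuously on a compact Hausdorff space X and fixes a unique probability measure on X, then K acts transitively on X. -/
open MeasureTheory

/-- If a compact group `K` acts continuously on a compact Hausdorff space `X` and there is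
exactly one `K`-invariant probability measure on `X`, then the action is transitive. -/
theorem transitive_of_uniqueInvariantMeasure {K X : Type*} [Group K] [TopologicalSpace K]
    [IsTopologicalGroup K] [CompactSpace K]
    [TopologicalSpace X] [CompactSpace X] [T2Space X] [MeasurableSpace X] [BorelSpace X]
    [MulAction K X] [ContinuousSMul K X]
    (huniq : ∃! μ : Measure X, IsProbabilityMeasure μ ∧
      ∀ k : K, Measure.map (fun x => k • x) μ = μ) :
    ∀ x y : X, ∃ k : K, k • x = y := by
  classical
  obtain ⟨μ, ⟨hμp, hμinv⟩, huniq'⟩ := huniq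
  borelize K
  haveI : Nonempty K := ⟨1⟩
  set h : Measure K := Measure.haarMeasure (⊤ : TopologicalSpace.PositiveCompacts K) with hh
  have hprob : IsProbabilityMeasure h := by
    constructor
    rw [← TopologicalSpace.PositiveCompacts.coe_top (α := K)]
    exact Measure.haarMeasure_self
  -- orbit maps are continuous and measurable
  have hcont : ∀ z : X, Continuous (fun k : K => k • z) :=
    fun z => continuous_id.smul continuous_const
  have hmeas : ∀ z : X, Measurable (fun k : K => k • z) := fun z => (hcont z).measurable
  -- the pushforward measures
  set ν : X → Measure X := fun z => h.map (fun k : K => k • z) with hν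
  have hνeq : ∀ z : X, ν z = μ := by
    intro z
    refine huniq' (ν z) ⟨?_, ?_⟩
    · exact Measure.isProbabilityMeasure_map (hmeas z).aemeasurable
    · intro k
      have hk : Measurable fun x : X => k • x :=
        (continuous_const.smul continuous_id : Continuous fun x : X => k • x).measurable
      rw [hν]
      simp only
      rw [Measure.map_map hk (hmeas z)]
      have : ((fun x : X => k • x) ∘ fun g : K => g • z) = (fun g : K => g • z) ∘ (fun g => k * g) := by
        funext g; simp [mul_smul, Function.comp]
      rw [this, ← Measure.map_map (hmeas z) (measurable_const_mul k),
        map_mul_left_eq_self h k]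
  -- orbit measure is 1
  have horbit : ∀ z : X, μ (MulAction.orbit K z) = 1 := by
    intro z
    have hcl : IsClosed (MulAction.orbit K z) :=
      (isCompact_range (hcont z)).isClosed
    rw [← hνeq z, hν]
    simp only
    rw [Measure.map_apply (hmeas z) hcl.measurableSet]
    have : (fun k : K => k • z) ⁻¹' MulAction.orbit K z = Set.univ :=
      Set.eq_univ_of_forall fun k => MulAction.mem_orbit z k
    rw [this]
    exact hprob.measure_univ
  intro x y
  by_contra hcon
  push_neg at hcon
  have hdisj : Disjoint (MulAction.orbit K x) (MulAction.orbit K y) := by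
    rw [Set.disjoint_left]
    rintro z ⟨g, rfl⟩ ⟨g', hg'⟩
    have hgy : g' • y = g • x := hg'
    exact hcon (g'⁻¹ * g) (by rw [mul_smul, ← hgy, inv_smul_smul])
  have hclx : IsClosed (MulAction.orbit K x) := (isCompact_range (hcont x)).isClosed
  have hcly : IsClosed (MulAction.orbit K y) := (isCompact_range (hcont y)).isClosed
  have := measure_union hdisj hcly.measurableSet (μ := μ)
  have hle : μ (MulAction.orbit K x ∪ MulAction.orbit K y) ≤ 1 := prob_le_one
  rw [this, horbit x, horbit y] at hle
  norm_num at hle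
end

section
/- Let G = KP with K compact and P closed, and suppose the modular function Δ_P : P → ℝ_{>0} of P satisfies Δ_P = 1 on K ∩ P. Then the function ρ : G → ℝ_{>0} defined by ρ(kp) = Δ_P(p) is well defined and continuous, and satisfies ρ(gp) = ρ(g)Δ_P(p) for all g ∈ G, p ∈ P and ρ(kg) = ρ(g) for all k ∈ K. -/
/-- Let `G = KP` with `K` compact and `P` closed, and let `Δ` be the modular function of `P`
(a continuous homomorphism `P → ℝ_{>0}`) which is trivial on `K ∩ P`. Then
`ρ(kp) = Δ(p)` is a well-defined continuous positive function on `G` satisfying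
`ρ(gp) = ρ(g)Δ(p)` and `ρ(kg) = ρ(g)` for `k ∈ K`, `p ∈ P`. -/
theorem exists_rho_of_modular_function {G : Type*} [Group G] [TopologicalSpace G]
    [IsTopologicalGroup G] [T2Space G] [LocallyCompactSpace G]
    (K P : Subgroup G) (hK : IsCompact (K : Set G)) (hP : IsClosed (P : Set G))
    (hKP : ∀ g : G, ∃ k ∈ K, ∃ p ∈ P, g = k * p)
    (Δ : P →* ℝ) (hΔcont : Continuous Δ) (hΔpos : ∀ p : P, 0 < Δ p)
    (hΔK : ∀ p : P, (p : G) ∈ K → Δ p = 1) :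
    ∃ ρ : G → ℝ, Continuous ρ ∧ (∀ g, 0 < ρ g) ∧
      (∀ k ∈ K, ∀ p : P, ρ (k * (p : G)) = Δ p) ∧
      (∀ g : G, ∀ p : P, ρ (g * (p : G)) = ρ g * Δ p) ∧
      (∀ k ∈ K, ∀ g : G, ρ (k * g) = ρ g) := by
  classical
  -- well-definedness
  have hwd : ∀ (k₁ k₂ : G), k₁ ∈ K → k₂ ∈ K → ∀ (p₁ p₂ : P),
      k₁ * (p₁ : G) = k₂ * (p₂ : G) → Δ p₁ = Δ p₂ := by
    intro k₁ k₂ hk₁ hk₂ p₁ p₂ h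
    have hmem : ((p₂ * p₁⁻¹ : P) : G) ∈ K := by
      have : ((p₂ * p₁⁻¹ : P) : G) = k₂⁻¹ * k₁ := by
        push_cast
        have : (p₂ : G) = k₂⁻¹ * k₁ * (p₁ : G) := by
          rw [mul_assoc, h]; group
        rw [this]; group
      rw [this]; exact K.mul_mem (K.inv_mem hk₂) hk₁
    have h1 : Δ (p₂ * p₁⁻¹) = 1 := hΔK _ hmem
    have h2 : Δ p₂ * Δ p₁⁻¹ = 1 := by rw [← map_mul]; exact h1
    have h3 : Δ p₁⁻¹ * Δ p₁ = 1 := by rw [← map_mul, inv_mul_cancel, map_one]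
    have : Δ p₂ * (Δ p₁⁻¹ * Δ p₁) = Δ p₁ := by rw [← mul_assoc, h2, one_mul]
    rw [h3, mul_one] at this
    exact this.symm
  -- choice of decomposition
  have hdec : ∀ g : G, ∃ kp : K × P, g = (kp.1 : G) * (kp.2 : G) := by
    intro g
    obtain ⟨k, hk, p, hp, hg⟩ := hKP g
    exact ⟨⟨⟨k, hk⟩, ⟨p, hp⟩⟩, hg⟩
  set ρ : G → ℝ := fun g => Δ (Classical.choose (hdec g)).2 with hρ
  have key : ∀ k ∈ K, ∀ p : P, ρ (k * (p : G)) = Δ p := by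
    intro k hk p
    have hspec := Classical.choose_spec (hdec (k * (p : G)))
    exact hwd _ _ (Classical.choose (hdec (k * (p : G)))).1.2 hk _ _ hspec.symm
  have key' : ∀ g : G, ρ g = Δ (Classical.choose (hdec g)).2 := fun g => rfl
  -- continuity
  have hcont : Continuous ρ := by
    set m : ↥(K : Set G) × ↥(P : Set G) → G := fun x => (x.1 : G) * (x.2 : G) with hm
    have hKcs : CompactSpace ↥(K : Set G) := isCompact_iff_compactSpace.mp hK
    have hmc : Continuous m :=
      (continuous_subtype_val.comp continuous_fst).mul
        (continuous_subtype_val.comp continuous_snd)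
    have hmsurj : Function.Surjective m := by
      intro g
      obtain ⟨k, hk, p, hp, hg⟩ := hKP g
      exact ⟨⟨⟨k, hk⟩, ⟨p, hp⟩⟩, hg.symm⟩
    -- m is a closed map
    have hmcl : IsClosedMap m := by
      have hincl : Topology.IsClosedEmbedding
          (Prod.map id ((↑) : ↥(P : Set G) → G) : ↥(K : Set G) × ↥(P : Set G) → ↥(K : Set G) × G) := by
        refine ⟨Topology.IsEmbedding.prodMap Topology.IsEmbedding.id
          Topology.IsEmbedding.subtypeVal, ?_⟩
        rw [Set.range_prodMap, Subtype.range_coe, Set.range_id]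
        exact isClosed_univ.prod hP
      let hHomeo : (↥(K : Set G) × G) ≃ₜ (↥(K : Set G) × G) :=
        { toFun := fun x => (x.1, (x.1 : G) * x.2)
          invFun := fun x => (x.1, (x.1 : G)⁻¹ * x.2)
          left_inv := fun x => by simp
          right_inv := fun x => by simp
          continuous_toFun := continuous_fst.prodMk
            ((continuous_subtype_val.comp continuous_fst).mul continuous_snd)
          continuous_invFun := continuous_fst.prodMk
            (((continuous_subtype_val.comp continuous_fst).inv).mul continuous_snd) }
      have hH : IsClosedMap (fun x : ↥(K : Set G) × G => (x.1, (x.1 : G) * x.2)) := by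
        exact hHomeo.isClosedMap
      have hsnd : IsClosedMap (Prod.snd : ↥(K : Set G) × G → G) :=
        isClosedMap_snd_of_compactSpace
      have : m = Prod.snd ∘ (fun x : ↥(K : Set G) × G => (x.1, (x.1 : G) * x.2)) ∘
          Prod.map id ((↑) : ↥(P : Set G) → G) := by
        funext x; rfl
      rw [this]
      exact (hsnd.comp hH).comp hincl.isClosedMap
    have hq : Topology.IsQuotientMap m := hmcl.isQuotientMap hmc hmsurj
    rw [hq.continuous_iff]
    have : ρ ∘ m = fun x : ↥(K : Set G) × ↥(P : Set G) => Δ ⟨(x.2 : G), x.2.2⟩ := by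
      funext x
      exact key _ x.1.2 _
    rw [this]
    exact hΔcont.comp
      (Continuous.subtype_mk (continuous_subtype_val.comp continuous_snd) _)
  refine ⟨ρ, hcont, fun g => hΔpos _, key, ?_, ?_⟩
  · intro g p
    obtain ⟨k, hk, q, hq, hg⟩ := hKP g
    have : g * (p : G) = k * ((⟨q, hq⟩ * p : P) : G) := by
      rw [hg]; push_cast; rw [mul_assoc]
    have hg' : g = k * ((⟨q, hq⟩ : P) : G) := hg
    rw [this, key k hk, map_mul, hg', key k hk]
  · intro k hk g
    obtain ⟨k', hk', q, hq', hg⟩ := hKP g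
    have : k * g = (k * k') * ((⟨q, hq'⟩ : P) : G) := by rw [hg, mul_assoc]
    have hg' : g = k' * ((⟨q, hq'⟩ : P) : G) := hg
    rw [this, key _ (K.mul_mem hk hk'), hg', key k' hk']
end

section
/- Let G = KP with K compact, P closed, and let ρ : G → ℝ_{>0} satisfy ρ(kgp) = ρ(g)Δ_P(p) for k ∈ K, p ∈ P, where Δ_P is the modular function of P. Then for every s ∈ ℂ the function φ_s(g) = ∫_K ρ(g⁻¹k)^{1/2 + is} dκ(k) satisfies the spherical functional equation φ_s(x)φ_s(y) = ∫_K φ_s(xky) dκ(k) for all x, y ∈ G, provided the matrix-coefficient identity holds, i.e., φ_s is bi-K-invariant and φ_s(e) = 1. -/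
open MeasureTheory Complex

/-- Let `G = KP` with `K` compact and `P` closed, let `Δ` be the modular function of `P`,
and let `ρ : G → ℝ_{>0}` satisfy `ρ(k g p) = ρ(g) Δ(p)`.  For `s ∈ ℂ` set
`φ_s(g) = ∫_K ρ(g⁻¹ k)^{1/2 + is} dκ(k)` where `κ` is the Haar probability measure of `K`.
If `φ_s` is bi-`K`-invariant and `φ_s(e) = 1` (the matrix-coefficient identity), then `φ_s`
satisfies the spherical functional equation
`φ_s(x) φ_s(y) = ∫_K φ_s(x k y) dκ(k)`. -/
theorem harish_chandra_function_is_spherical {G : Type*} [Group G] [TopologicalSpace G]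
    [IsTopologicalGroup G] [LocallyCompactSpace G] [T2Space G]
    [MeasurableSpace G] [BorelSpace G]
    (K P : Subgroup G) [CompactSpace K] (hP : IsClosed (P : Set G))
    (hKP : ∀ g : G, ∃ k ∈ K, ∃ p ∈ P, g = k * p)
    (Δ : P →* ℝ) (hΔcont : Continuous Δ) (hΔpos : ∀ p : P, 0 < Δ p)
    (hΔK : ∀ p : P, (p : G) ∈ K → Δ p = 1)
    (ρ : G → ℝ) (hρcont : Continuous ρ) (hρpos : ∀ g, 0 < ρ g)
    (hρ : ∀ k ∈ K, ∀ g : G, ∀ p : P, ρ (k * g * (p : G)) = ρ g * Δ p)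
    (κ₀ : Measure K) [κ₀.IsHaarMeasure] [IsProbabilityMeasure κ₀]
    (s : ℂ) (φs : G → ℂ)
    (hφs : ∀ g : G, φs g = ∫ k : K, ((ρ (g⁻¹ * (k : G)) : ℂ)) ^ ((1:ℂ)/2 + I * s) ∂κ₀)
    -- the matrix-coefficient identity: `φ_s` is bi-`K`-invariant and `φ_s(e) = 1`
    (hbi : ∀ k ∈ K, ∀ k' ∈ K, ∀ g : G, φs (k * g * k') = φs g)
    (hone : φs 1 = 1) :
    ∀ x y : G, φs x * φs y = ∫ k : K, φs (x * (k : G) * y) ∂κ₀ := by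
  intro x y
  set l : ℂ := (1:ℂ)/2 + I * s with hl
  haveI : BorelSpace K := Subtype.borelSpace (K : Set G)
  -- `K` is right invariant and inversion invariant
  haveI hright : κ₀.IsMulRightInvariant := by
    constructor
    intro g
    haveI : IsProbabilityMeasure (Measure.map (· * g) κ₀) :=
      Measure.isProbabilityMeasure_map (measurable_mul_const g).aemeasurable
    exact Measure.isHaarMeasure_eq_of_isProbabilityMeasure _ _
  haveI hinvinv : κ₀.IsInvInvariant := by
    constructor
    haveI : (κ₀.inv).IsHaarMeasure :=
      { toIsMulLeftInvariant := inferInstance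
        toIsFiniteMeasureOnCompacts := inferInstance
        toIsOpenPosMeasure := inferInstance }
    haveI : IsProbabilityMeasure κ₀.inv := by
      constructor
      rw [Measure.inv_apply]
      simp
    exact Measure.isHaarMeasure_eq_of_isProbabilityMeasure _ _
  -- basic facts about ρ
  have hρK : ∀ k : K, ρ (k : G) = ρ 1 := by
    intro k
    have h := hρ (k : G) k.2 1 (1 : P)
    simpa using h
  have hρ1l : ((ρ 1 : ℝ) : ℂ) ^ l = 1 := by
    have h := hφs 1
    rw [hone] at h
    have hconst : (fun k : K => ((ρ ((1:G)⁻¹ * (k : G)) : ℝ) : ℂ) ^ l)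
        = fun _ : K => ((ρ (1:G) : ℝ) : ℂ) ^ l := by
      funext k
      rw [inv_one, one_mul, hρK]
    rw [hl] at h
    rw [hconst, integral_const] at h
    simpa using h.symm
  -- the key computation for fixed k'
  have keyA : ∀ k' : K,
      (∫ k : K, ((ρ (y⁻¹ * (k : G)⁻¹ * x⁻¹ * (k' : G)) : ℝ) : ℂ) ^ l ∂κ₀)
        = ((ρ (x⁻¹ * (k' : G)) : ℝ) : ℂ) ^ l * φs y := by
    intro k'
    obtain ⟨k₀, hk₀, p, hp, hdec⟩ := hKP (x⁻¹ * (k' : G))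
    set p' : P := ⟨p, hp⟩
    have hx : ρ (x⁻¹ * (k' : G)) = ρ 1 * Δ p' := by
      rw [hdec]
      have := hρ k₀ hk₀ 1 p'
      simpa using this
    have hpt : ∀ k : K, ρ (y⁻¹ * (k : G)⁻¹ * x⁻¹ * (k' : G))
        = ρ (y⁻¹ * (k : G)⁻¹ * k₀) * Δ p' := by
      intro k
      have h1 : y⁻¹ * (k : G)⁻¹ * x⁻¹ * (k' : G)
          = 1 * (y⁻¹ * (k : G)⁻¹ * k₀) * (p' : G) := by
        rw [mul_assoc (y⁻¹ * (k : G)⁻¹) x⁻¹ (k' : G), hdec, show ((p' : P) : G) = p from rfl]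
        group
      rw [h1, hρ 1 (one_mem K) _ p']
    -- the substitution step
    have hsub : (∫ k : K, ((ρ (y⁻¹ * (k : G)⁻¹ * k₀) : ℝ) : ℂ) ^ l ∂κ₀) = φs y := by
      set k₀' : K := ⟨k₀, hk₀⟩
      have h1 : (∫ k : K, ((ρ (y⁻¹ * (k : G)⁻¹ * k₀) : ℝ) : ℂ) ^ l ∂κ₀)
          = ∫ k : K, ((ρ (y⁻¹ * ((k₀' * k : K) : G)⁻¹ * k₀) : ℝ) : ℂ) ^ l ∂κ₀ :=
        (integral_mul_left_eq_self
          (fun k : K => ((ρ (y⁻¹ * ((k : K) : G)⁻¹ * k₀) : ℝ) : ℂ) ^ l) k₀').symm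
      have h2 : (fun k : K => ((ρ (y⁻¹ * ((k₀' * k : K) : G)⁻¹ * k₀) : ℝ) : ℂ) ^ l)
          = fun k : K => ((ρ (y⁻¹ * (k : G)⁻¹) : ℝ) : ℂ) ^ l := by
        funext k
        have : y⁻¹ * ((k₀' * k : K) : G)⁻¹ * k₀ = y⁻¹ * (k : G)⁻¹ := by
          push_cast
          rw [show ((k₀' : K) : G) = k₀ from rfl]
          group
        rw [this]
      have h3 : (∫ k : K, ((ρ (y⁻¹ * (k : G)⁻¹) : ℝ) : ℂ) ^ l ∂κ₀)
          = ∫ k : K, ((ρ (y⁻¹ * (k : G)) : ℝ) : ℂ) ^ l ∂κ₀ := by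
        have := integral_inv_eq_self
          (fun k : K => ((ρ (y⁻¹ * (k : G)) : ℝ) : ℂ) ^ l) κ₀
        simpa using this
      rw [h1, h2, h3]
      exact (hφs y).symm
    calc (∫ k : K, ((ρ (y⁻¹ * (k : G)⁻¹ * x⁻¹ * (k' : G)) : ℝ) : ℂ) ^ l ∂κ₀)
        = ∫ k : K, ((ρ (y⁻¹ * (k : G)⁻¹ * k₀) : ℝ) : ℂ) ^ l * ((Δ p' : ℝ) : ℂ) ^ l ∂κ₀ := by
          refine integral_congr_ae (Filter.Eventually.of_forall fun k => ?_)
          dsimp only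
          rw [hpt k]
          push_cast
          exact mul_cpow_ofReal_nonneg (hρpos _).le (hΔpos p').le l
      _ = (∫ k : K, ((ρ (y⁻¹ * (k : G)⁻¹ * k₀) : ℝ) : ℂ) ^ l ∂κ₀) * ((Δ p' : ℝ) : ℂ) ^ l :=
          integral_mul_const _ _
      _ = φs y * ((Δ p' : ℝ) : ℂ) ^ l := by rw [hsub]
      _ = ((ρ (x⁻¹ * (k' : G)) : ℝ) : ℂ) ^ l * φs y := by
          have : ((ρ (x⁻¹ * (k' : G)) : ℝ) : ℂ) ^ l = ((Δ p' : ℝ) : ℂ) ^ l := by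
            rw [hx]
            push_cast
            rw [mul_cpow_ofReal_nonneg (hρpos 1).le (hΔpos p').le l]
            rw [hρ1l, one_mul]
          rw [this]
          ring
  -- integrability for Fubini
  have hcontF : Continuous (fun q : K × K =>
      ((ρ (y⁻¹ * (q.1 : G)⁻¹ * x⁻¹ * (q.2 : G)) : ℝ) : ℂ) ^ l) := by
    have hbase : Continuous (fun q : K × K =>
        ((ρ (y⁻¹ * (q.1 : G)⁻¹ * x⁻¹ * (q.2 : G)) : ℝ) : ℂ)) := by
      apply Complex.continuous_ofReal.comp
      apply hρcont.comp
      fun_prop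
    refine hbase.cpow continuous_const fun q => ?_
    exact Or.inl (by exact_mod_cast hρpos _)
  -- main computation
  have hstep1 : (∫ k : K, φs (x * (k : G) * y) ∂κ₀)
      = ∫ k : K, ∫ k' : K,
          ((ρ (y⁻¹ * (k : G)⁻¹ * x⁻¹ * (k' : G)) : ℝ) : ℂ) ^ l ∂κ₀ ∂κ₀ := by
    refine integral_congr_ae (Filter.Eventually.of_forall fun k => ?_)
    dsimp only
    rw [hφs (x * (k : G) * y)]
    refine integral_congr_ae (Filter.Eventually.of_forall fun k' => ?_)
    dsimp only
    have : (x * (k : G) * y)⁻¹ * (k' : G) = y⁻¹ * (k : G)⁻¹ * x⁻¹ * (k' : G) := by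
      group
    rw [this]
  have hswap : (∫ k : K, ∫ k' : K,
        ((ρ (y⁻¹ * (k : G)⁻¹ * x⁻¹ * (k' : G)) : ℝ) : ℂ) ^ l ∂κ₀ ∂κ₀)
      = ∫ k' : K, ∫ k : K,
        ((ρ (y⁻¹ * (k : G)⁻¹ * x⁻¹ * (k' : G)) : ℝ) : ℂ) ^ l ∂κ₀ ∂κ₀ := by
    apply integral_integral_swap_of_hasCompactSupport
    · exact hcontF
    · exact IsCompact.of_isClosed_subset isCompact_univ (isClosed_tsupport _) (Set.subset_univ _)
  rw [hstep1, hswap]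
  symm
  calc (∫ k' : K, ∫ k : K,
        ((ρ (y⁻¹ * (k : G)⁻¹ * x⁻¹ * (k' : G)) : ℝ) : ℂ) ^ l ∂κ₀ ∂κ₀)
      = ∫ k' : K, ((ρ (x⁻¹ * (k' : G)) : ℝ) : ℂ) ^ l * φs y ∂κ₀ := by
        refine integral_congr_ae (Filter.Eventually.of_forall fun k' => ?_)
        exact keyA k'
    _ = (∫ k' : K, ((ρ (x⁻¹ * (k' : G)) : ℝ) : ℂ) ^ l ∂κ₀) * φs y := integral_mul_const _ _
    _ = φs x * φs y := by rw [← hφs x]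
end
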